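/- Let R be a two-dimensional regular local domain with maximal ideal M, residue characteristic p, and fraction field K; let π, δ ∈ M − M² with M = (π, δ). Let m be an integer prime to p, ρ a primitive m-th root of unity over K with monic minimal polynomial f(x) ∈ R[x], and R' = R[x]/(f(x)), so that R'/R is Galois with abelian group H. Choose (as is possible) the prime factorizations π = ∏_i π_i and δ = ∏_j δ_j in the UFD R' so that the sets {π_i} and {δ_j} each form a single H-orbit. Then: every maximal ideal of R' contains exactly one π_i and exactly one δ_j; the stabilizer H_M of a maximal ideal over M is contained in H_π ∩ H_δ, where H_π and H_δ are the stabilizers of a prime over (π) and over (δ); and for each pair (i,j), the ideal (π_i, δ_j)R' is either all of R' or is the intersection of a set of maximal ideals of R' forming a single H_π ∩ H_δ orbit, and this orbit is uniquely determined. -/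

import Mathlib

open IsLocalRing

open Polynomial
set_option linter.unusedSectionVars false
set_option maxHeartbeats 1000000

namespace Statement19

section Setup

variable (A : Type) [CommRing A] [IsDomain A]
variable (F : Type) [Field F] [Algebra A F] [IsFractionRing A F]
variable (q : Polynomial A)

local notation "qF" => q.map (algebraMap A F)
local notation "LL" => AdjoinRoot (q.map (algebraMap A F))

lemma aeval_rootL : Polynomial.aeval (AdjoinRoot.root qF) q = 0 := by
  rw [Polynomial.aeval_def, AdjoinRoot.algebraMap_eq' A, ← Polynomial.eval₂_map]
  exact AdjoinRoot.eval₂_root qF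

/-- The canonical `A`-algebra embedding of `A[x]/(q)` into `F[x]/(q)`. -/
noncomputable def phi : AdjoinRoot q →ₐ[A] AdjoinRoot (q.map (algebraMap A F)) :=
  AdjoinRoot.liftAlgHom q (Algebra.ofId _ _) (AdjoinRoot.root qF) (aeval_rootL A F q)

@[simp] lemma phi_root : phi A F q (AdjoinRoot.root q) = AdjoinRoot.root qF := by
  unfold phi; exact AdjoinRoot.liftAlgHom_root q (Algebra.ofId _ _) _ (aeval_rootL A F q)

lemma phi_mk_mod (hmonic : q.Monic) (P0 : Polynomial A) :
    phi A F q (AdjoinRoot.mk q P0)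
      = AdjoinRoot.mk qF ((P0 %ₘ q).map (algebraMap A F)) := by
  have hmod : AdjoinRoot.mk q P0 = AdjoinRoot.mk q (P0 %ₘ q) := by
    rw [AdjoinRoot.mk_eq_mk]
    exact ⟨P0 /ₘ q, by linear_combination -Polynomial.modByMonic_add_div P0 q⟩
  rw [hmod]
  show Polynomial.eval₂ (algebraMap A LL) (AdjoinRoot.root qF) (P0 %ₘ q) = _
  rw [← Polynomial.aeval_def, ← AdjoinRoot.aeval_eq, Polynomial.aeval_map_algebraMap]

lemma phi_injective (hmonic : q.Monic) : Function.Injective (phi A F q) := by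
  have hinj : Function.Injective (algebraMap A F) := IsFractionRing.injective A F
  rw [injective_iff_map_eq_zero]
  intro a ha
  obtain ⟨P0, rfl⟩ := AdjoinRoot.mk_surjective (g := q) a
  rw [phi_mk_mod A F q hmonic, AdjoinRoot.mk_eq_zero] at ha
  have hdeg : ((P0 %ₘ q).map (algebraMap A F)).degree < (q.map (algebraMap A F)).degree := by
    rw [degree_map_eq_of_injective hinj, degree_map_eq_of_injective hinj]
    exact Polynomial.degree_modByMonic_lt P0 hmonic
  have h0 : (P0 %ₘ q).map (algebraMap A F) = 0 := Polynomial.eq_zero_of_dvd_of_degree_lt ha hdeg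
  have hP0 : P0 %ₘ q = 0 := Polynomial.map_injective _ hinj (by simpa using h0)
  have : AdjoinRoot.mk q P0 = AdjoinRoot.mk q (P0 %ₘ q) := by
    rw [AdjoinRoot.mk_eq_mk]
    exact ⟨P0 /ₘ q, by linear_combination -Polynomial.modByMonic_add_div P0 q⟩
  rw [this, hP0, map_zero]

lemma isDomainA' (hmonic : q.Monic) (hirr : Irreducible (q.map (algebraMap A F))) :
    IsDomain (AdjoinRoot q) := by
  haveI : Fact (Irreducible (q.map (algebraMap A F))) := ⟨hirr⟩
  exact Function.Injective.isDomain (phi A F q).toRingHom (phi_injective A F q hmonic)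

variable {m : ℕ}

lemma sigma_root_pow (hmonic : q.Monic) (hirr : Irreducible (q.map (algebraMap A F)))
    (hroot : IsPrimitiveRoot (AdjoinRoot.root q) m) (hm0 : 0 < m)
    (σ : AdjoinRoot q ≃ₐ[A] AdjoinRoot q) :
    ∃ i < m, σ (AdjoinRoot.root q) = (AdjoinRoot.root q) ^ i := by
  haveI := isDomainA' A F q hmonic hirr
  haveI : NeZero m := ⟨hm0.ne'⟩
  have h1 : (σ (AdjoinRoot.root q)) ^ m = 1 := by
    rw [← map_pow, hroot.pow_eq_one, map_one]
  obtain ⟨i, hi, hpow⟩ := hroot.eq_pow_of_pow_eq_one h1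
  exact ⟨i, hi, hpow.symm⟩

lemma auts_commute (hmonic : q.Monic) (hirr : Irreducible (q.map (algebraMap A F)))
    (hroot : IsPrimitiveRoot (AdjoinRoot.root q) m) (hm0 : 0 < m)
    (σ τ : AdjoinRoot q ≃ₐ[A] AdjoinRoot q) (x : AdjoinRoot q) :
    σ (τ x) = τ (σ x) := by
  obtain ⟨i, _, hσ⟩ := sigma_root_pow A F q hmonic hirr hroot hm0 σ
  obtain ⟨j, _, hτ⟩ := sigma_root_pow A F q hmonic hirr hroot hm0 τ
  have : σ.toAlgHom.comp τ.toAlgHom = τ.toAlgHom.comp σ.toAlgHom := by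
    apply AdjoinRoot.algHom_ext
    show σ (τ (AdjoinRoot.root q)) = τ (σ (AdjoinRoot.root q))
    rw [hσ, hτ, map_pow, map_pow, hσ, hτ, ← pow_mul, ← pow_mul, mul_comm]
  exact AlgHom.congr_fun this x

lemma finiteH (hmonic : q.Monic) (hirr : Irreducible (q.map (algebraMap A F)))
    (hroot : IsPrimitiveRoot (AdjoinRoot.root q) m) (hm0 : 0 < m) :
    Finite (AdjoinRoot q ≃ₐ[A] AdjoinRoot q) := by
  have h : ∀ σ : AdjoinRoot q ≃ₐ[A] AdjoinRoot q,
      ∃ i : Fin m, σ (AdjoinRoot.root q) = (AdjoinRoot.root q) ^ (i : ℕ) := by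
    intro σ
    obtain ⟨i, hi, he⟩ := sigma_root_pow A F q hmonic hirr hroot hm0 σ
    exact ⟨⟨i, hi⟩, he⟩
  apply Finite.of_injective (fun σ => Classical.choose (h σ))
  intro σ τ heq
  have e1 := Classical.choose_spec (h σ)
  have e2 := Classical.choose_spec (h τ)
  simp only at heq
  rw [heq] at e1
  have : σ.toAlgHom = τ.toAlgHom := AdjoinRoot.algHom_ext (by
    show σ (AdjoinRoot.root q) = τ (AdjoinRoot.root q)
    rw [e1]; exact e2.symm)
  exact AlgEquiv.ext fun x => AlgHom.congr_fun this x

lemma fixed_mem_range (hmonic : q.Monic) (hirr : Irreducible (q.map (algebraMap A F)))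
    (hroot : IsPrimitiveRoot (AdjoinRoot.root q) m) (hm0 : 0 < m) (hmF : (m : F) ≠ 0)
    (z : AdjoinRoot q) (hz : ∀ σ : AdjoinRoot q ≃ₐ[A] AdjoinRoot q, σ z = z) :
    ∃ r : A, algebraMap A (AdjoinRoot q) r = z := by
  haveI := isDomainA' A F q hmonic hirr
  haveI : Fact (Irreducible (q.map (algebraMap A F))) := ⟨hirr⟩
  haveI : NeZero m := ⟨hm0.ne'⟩
  have hinj : Function.Injective (algebraMap A F) := IsFractionRing.injective A F
  have hφinj := phi_injective A F q hmonic
  set ρ : AdjoinRoot (q.map (algebraMap A F)) := AdjoinRoot.root qF with hρdef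
  have hρ : IsPrimitiveRoot ρ m := by
    have := hroot.map_of_injective (f := phi A F q) hφinj
    rwa [phi_root] at this
  have haeρ : Polynomial.aeval ρ qF = 0 := by
    rw [AdjoinRoot.aeval_eq, AdjoinRoot.mk_self]
  have hdvd : qF ∣ ((X : F[X]) ^ m - 1) := by
    rw [← AdjoinRoot.mk_eq_zero (f := qF), ← AdjoinRoot.aeval_eq]
    simp [hρ.pow_eq_one]
    exact sub_eq_zero.mpr hρ.pow_eq_one
  have hXne : ((X : F[X]) ^ m - 1) ≠ 0 := by
    have h1 : ((X : F[X]) ^ m - C 1).Monic := monic_X_pow_sub_C (1 : F) hm0.ne'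
    simpa using h1.ne_zero
  have hsepqF : Polynomial.Separable qF :=
    Polynomial.Separable.of_dvd (Polynomial.X_pow_sub_one_separable_iff.mpr hmF) hdvd
  have hsplXm : Splits (((X : F[X]) ^ m - 1).map (algebraMap F LL)) := by
    have hmap : (((X : F[X]) ^ m - 1).map (algebraMap F LL))
        = ∏ ζ ∈ nthRootsFinset m (1 : LL), (X - C ζ) := by
      rw [Polynomial.map_sub, Polynomial.map_pow, map_X, Polynomial.map_one]
      exact X_pow_sub_one_eq_prod hm0 hρ
    rw [hmap]
    exact Splits.prod fun ζ _ => Splits.X_sub_C _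
  have hsplqF : Splits (Polynomial.map (algebraMap F LL) qF) :=
    hsplXm.of_dvd (Polynomial.map_ne_zero hXne) (Polynomial.map_dvd _ hdvd)
  have hqFne : qF ≠ 0 := fun h => not_irreducible_zero (h ▸ hirr)
  haveI hsplit : Polynomial.IsSplittingField F LL qF := by
    constructor
    · exact hsplqF
    · rw [eq_top_iff, ← AdjoinRoot.adjoinRoot_eq_top]
      apply Algebra.adjoin_mono
      rw [Set.singleton_subset_iff, Polynomial.mem_rootSet]
      exact ⟨hqFne, haeρ⟩
  haveI : FiniteDimensional F LL := Polynomial.IsSplittingField.finiteDimensional LL qF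
  haveI : IsGalois F LL := IsGalois.of_separable_splitting_field hsepqF
  have key : ∀ τ : LL ≃ₐ[F] LL, τ (phi A F q z) = phi A F q z := by
    intro τ
    have h1 : (τ ρ) ^ m = 1 := by rw [← map_pow, hρ.pow_eq_one, map_one]
    have h2 : (τ.symm ρ) ^ m = 1 := by rw [← map_pow, hρ.pow_eq_one, map_one]
    obtain ⟨i, _, hτρ⟩ := hρ.eq_pow_of_pow_eq_one h1
    obtain ⟨j, _, hτρ'⟩ := hρ.eq_pow_of_pow_eq_one h2
    have haegen : ∀ k : ℕ, Polynomial.aeval (ρ ^ k) qF = 0 →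
        Polynomial.aeval ((AdjoinRoot.root q) ^ k) q = 0 := by
      intro k hk
      apply hφinj
      rw [map_zero, ← Polynomial.aeval_algHom_apply, map_pow, phi_root,
        ← Polynomial.aeval_map_algebraMap F, hk]
    have he1 : Polynomial.aeval (ρ ^ i) qF = 0 := by
      rw [hτρ, Polynomial.aeval_algHom_apply τ ρ (q.map (algebraMap A F)), haeρ, map_zero]
    have he2 : Polynomial.aeval (ρ ^ j) qF = 0 := by
      rw [hτρ', Polynomial.aeval_algHom_apply τ.symm ρ (q.map (algebraMap A F)), haeρ, map_zero]
    set σp := AdjoinRoot.liftAlgHom q (Algebra.ofId _ _) ((AdjoinRoot.root q) ^ i) (haegen i he1) with hσp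
    set σm := AdjoinRoot.liftAlgHom q (Algebra.ofId _ _) ((AdjoinRoot.root q) ^ j) (haegen j he2) with hσm
    have hσproot : σp (AdjoinRoot.root q) = (AdjoinRoot.root q) ^ i :=
      AdjoinRoot.liftAlgHom_root q (Algebra.ofId _ _) _ (haegen i he1)
    have hσmroot : σm (AdjoinRoot.root q) = (AdjoinRoot.root q) ^ j :=
      AdjoinRoot.liftAlgHom_root q (Algebra.ofId _ _) _ (haegen j he2)
    have hφpow : ∀ k : ℕ, phi A F q ((AdjoinRoot.root q) ^ k) = ρ ^ k := by
      intro k; rw [map_pow, phi_root]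
    have hcomp1 : σp.comp σm = AlgHom.id A (AdjoinRoot q) := by
      apply AdjoinRoot.algHom_ext
      show σp (σm (AdjoinRoot.root q)) = AdjoinRoot.root q
      rw [hσmroot, map_pow, hσproot, ← pow_mul]
      apply hφinj
      rw [hφpow, phi_root, pow_mul, hτρ, ← map_pow, hτρ']
      exact τ.apply_symm_apply ρ
    have hcomp2 : σm.comp σp = AlgHom.id A (AdjoinRoot q) := by
      apply AdjoinRoot.algHom_ext
      show σm (σp (AdjoinRoot.root q)) = AdjoinRoot.root q
      rw [hσproot, map_pow, hσmroot, ← pow_mul]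
      apply hφinj
      rw [hφpow, phi_root, pow_mul, hτρ', ← map_pow, hτρ]
      exact τ.symm_apply_apply ρ
    set σ : AdjoinRoot q ≃ₐ[A] AdjoinRoot q := AlgEquiv.ofAlgHom σp σm hcomp1 hcomp2 with hσdef
    have hkey : (τ.toAlgHom.restrictScalars A).comp (phi A F q) = (phi A F q).comp σp := by
      apply AdjoinRoot.algHom_ext
      show τ (phi A F q (AdjoinRoot.root q)) = phi A F q (σp (AdjoinRoot.root q))
      rw [phi_root, hσproot, hφpow, hτρ]
    have : τ (phi A F q z) = phi A F q (σp z) := AlgHom.congr_fun hkey z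
    rw [this]
    have hσz : σ z = z := hz σ
    have : σp z = z := hσz
    rw [this]
  have hfixmem : phi A F q z ∈
      IntermediateField.fixedField (⊤ : Subgroup (LL ≃ₐ[F] LL)) := by
    intro g
    exact key g.1
  have hbot : IntermediateField.fixedField (⊤ : Subgroup (LL ≃ₐ[F] LL)) = ⊥ := by
    have h := IsGalois.fixedField_fixingSubgroup (⊥ : IntermediateField F LL)
    rwa [IntermediateField.fixingSubgroup_bot] at h
  rw [hbot] at hfixmem
  obtain ⟨c, hc⟩ := IntermediateField.mem_bot.mp hfixmem
  obtain ⟨P0, rfl⟩ := AdjoinRoot.mk_surjective (g := q) z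
  set P := P0 %ₘ q with hPdef
  have hval : phi A F q (AdjoinRoot.mk q P0) = AdjoinRoot.mk qF (P.map (algebraMap A F)) :=
    phi_mk_mod A F q hmonic P0
  have hcC : algebraMap F LL c = AdjoinRoot.mk qF (C c) := rfl
  have hdvd2 : qF ∣ (P.map (algebraMap A F) - C c) := by
    rw [← AdjoinRoot.mk_eq_mk (f := qF)]
    rw [← hval, ← hcC, hc]
  have hdegP : (P.map (algebraMap A F)).degree < (q.map (algebraMap A F)).degree := by
    rw [degree_map_eq_of_injective hinj, degree_map_eq_of_injective hinj]
    exact Polynomial.degree_modByMonic_lt P0 hmonic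
  have hdegq : 0 < (q.map (algebraMap A F)).degree := Polynomial.degree_pos_of_irreducible hirr
  have hdiff : (P.map (algebraMap A F) - C c) = 0 := by
    apply Polynomial.eq_zero_of_dvd_of_degree_lt hdvd2
    exact lt_of_le_of_lt (Polynomial.degree_sub_le _ _)
      (max_lt hdegP (lt_of_le_of_lt Polynomial.degree_C_le hdegq))
  have hmapC : P.map (algebraMap A F) = C c := sub_eq_zero.mp hdiff
  refine ⟨P.coeff 0, ?_⟩
  have hPC : P = C (P.coeff 0) := by
    apply Polynomial.ext
    intro n
    match n with
    | 0 => simp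
    | Nat.succ k =>
      apply hinj
      have := congrArg (fun pp => Polynomial.coeff pp (k + 1)) hmapC
      simp only [Polynomial.coeff_map] at this
      rw [this]
      simp [Polynomial.coeff_C]
  have hz' : AdjoinRoot.mk q P0 = AdjoinRoot.mk q P := by
    rw [AdjoinRoot.mk_eq_mk]
    exact ⟨P0 /ₘ q, by linear_combination -Polynomial.modByMonic_add_div P0 q⟩
  rw [hz']
  have hfin : AdjoinRoot.mk q P = AdjoinRoot.mk q (C (P.coeff 0)) := by rw [← hPC]
  rw [hfin]
  rfl

lemma moduleFinite (hmonic : q.Monic) : Module.Finite A (AdjoinRoot q) :=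
  Module.Finite.of_basis (AdjoinRoot.powerBasis' hmonic).basis

lemma algebraMap_injective' (hmonic : q.Monic) (hirr : Irreducible (q.map (algebraMap A F))) :
    Function.Injective (algebraMap A (AdjoinRoot q)) := by
  haveI : Fact (Irreducible (q.map (algebraMap A F))) := ⟨hirr⟩
  intro a b h
  have h2 : algebraMap A LL a = algebraMap A LL b := by
    rw [← (phi A F q).commutes a, ← (phi A F q).commutes b, h]
  rw [IsScalarTower.algebraMap_apply A F LL, IsScalarTower.algebraMap_apply A F LL] at h2
  exact IsFractionRing.injective A F ((algebraMap F LL).injective h2)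

lemma transitivity (hmonic : q.Monic) (hirr : Irreducible (q.map (algebraMap A F)))
    (hroot : IsPrimitiveRoot (AdjoinRoot.root q) m) (hm0 : 0 < m) (hmF : (m : F) ≠ 0)
    (N N' : Ideal (AdjoinRoot q)) (hN : N.IsMaximal) (hN' : N'.IsMaximal)
    (hcom : N.comap (algebraMap A (AdjoinRoot q)) = N'.comap (algebraMap A (AdjoinRoot q))) :
    ∃ σ : AdjoinRoot q ≃ₐ[A] AdjoinRoot q, Ideal.map σ N' = N := by
  haveI := finiteH A F q hmonic hirr hroot hm0
  haveI : Fintype (AdjoinRoot q ≃ₐ[A] AdjoinRoot q) := Fintype.ofFinite _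
  haveI : DecidableEq (AdjoinRoot q ≃ₐ[A] AdjoinRoot q) := Classical.decEq _
  haveI := hN.isPrime
  have hsub : (N' : Set (AdjoinRoot q)) ⊆
      ⋃ σ ∈ (Finset.univ : Finset (AdjoinRoot q ≃ₐ[A] AdjoinRoot q)),
        (Ideal.comap σ N : Set (AdjoinRoot q)) := by
    intro x hx
    set z := ∏ σ : AdjoinRoot q ≃ₐ[A] AdjoinRoot q, σ x with hzdef
    have hfix : ∀ τ : AdjoinRoot q ≃ₐ[A] AdjoinRoot q, τ z = z := by
      intro τ
      rw [hzdef, map_prod]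
      exact Fintype.prod_equiv (Equiv.mulLeft τ) _ _
        (fun σ => (AlgEquiv.mul_apply τ σ x).symm)
    obtain ⟨r, hr⟩ := fixed_mem_range A F q hmonic hirr hroot hm0 hmF z hfix
    have hzN' : z ∈ N' := by
      rw [hzdef, ← Finset.mul_prod_erase Finset.univ _
        (Finset.mem_univ (1 : AdjoinRoot q ≃ₐ[A] AdjoinRoot q))]
      exact Ideal.mul_mem_right _ _ (by simpa using hx)
    have hzN : z ∈ N := by
      have h1 : r ∈ N'.comap (algebraMap A (AdjoinRoot q)) := by
        rw [Ideal.mem_comap, hr]; exact hzN'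
      rw [← hcom, Ideal.mem_comap, hr] at h1
      exact h1
    rw [hzdef] at hzN
    obtain ⟨σ, _, hσx⟩ := (Ideal.IsPrime.prod_mem_iff).mp hzN
    exact Set.mem_biUnion (Finset.mem_univ σ) hσx
  obtain ⟨σ, _, hle⟩ := (Ideal.subset_union_prime 1 1
    (fun σ _ _ _ => Ideal.IsPrime.comap _)).mp hsub
  have hne : Ideal.comap σ N ≠ ⊤ := fun ht => hN.ne_top (by
    rw [Ideal.eq_top_iff_one] at ht ⊢
    simpa using ht)
  have heq : N' = Ideal.comap σ N := hN'.eq_of_le hne hle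
  refine ⟨σ, ?_⟩
  rw [heq]
  have h3 : Ideal.comap σ N = Ideal.comap (σ.toRingEquiv : AdjoinRoot q →+* AdjoinRoot q) N := rfl
  have h4 : Ideal.map σ (Ideal.comap (σ.toRingEquiv : AdjoinRoot q →+* AdjoinRoot q) N)
      = Ideal.map (σ.toRingEquiv : AdjoinRoot q →+* AdjoinRoot q)
          (Ideal.comap (σ.toRingEquiv : AdjoinRoot q →+* AdjoinRoot q) N) := rfl
  rw [h3, h4]
  exact Ideal.map_comap_of_surjective _ σ.toRingEquiv.surjective N

variable [IsLocalRing A] [IsNoetherianRing A]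

lemma unram (hmonic : q.Monic) (hsep : (q.map (residue A)).Separable)
    (N : Ideal (AdjoinRoot q)) (hN : N.IsMaximal)
    (hJN : Ideal.map (algebraMap A (AdjoinRoot q)) (maximalIdeal A) ≤ N)
    {x : AdjoinRoot q} (hx : x ∈ N) :
    ∃ s ∉ N, s * x ∈ Ideal.map (algebraMap A (AdjoinRoot q)) (maximalIdeal A) := by
  classical
  set I := maximalIdeal A with hIdef
  haveI hImax : I.IsMaximal := maximalIdeal.isMaximal A
  letI : Field (A ⧸ I) := Ideal.Quotient.field I
  have hsep' : (q.map (Ideal.Quotient.mk I)).Separable := hsep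
  set J : Ideal (AdjoinRoot q) := Ideal.map (AdjoinRoot.of q) I with hJdef
  set Φ := AdjoinRoot.quotAdjoinRootEquivQuotPolynomialQuot I q with hΦdef
  set qbar : (A ⧸ I)[X] := q.map (Ideal.Quotient.mk I) with hqbardef
  set mkJ := Ideal.Quotient.mk J with hmkJdef
  haveI hNqprime : (N.map mkJ).IsPrime :=
    Ideal.map_isPrime_of_surjective Ideal.Quotient.mk_surjective
      (by rw [Ideal.mk_ker]; exact hJN)
  set NT : Ideal ((A ⧸ I)[X] ⧸ Ideal.span ({qbar} : Set ((A ⧸ I)[X]))) :=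
    Ideal.comap Φ.symm (N.map mkJ) with hNTdef
  haveI hNTprime : NT.IsPrime := Ideal.IsPrime.comap _
  set P : Ideal ((A ⧸ I)[X]) :=
    Ideal.comap (Ideal.Quotient.mk (Ideal.span ({qbar} : Set ((A ⧸ I)[X])))) NT with hPdef
  haveI hPprime : P.IsPrime := Ideal.IsPrime.comap _
  have hqbarP : qbar ∈ P := by
    rw [hPdef, Ideal.mem_comap,
      Ideal.Quotient.eq_zero_iff_mem.mpr (Ideal.subset_span (Set.mem_singleton _))]
    exact NT.zero_mem
  obtain ⟨g, hg0⟩ := (IsPrincipalIdealRing.principal P).principal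
  have hg : P = Ideal.span {g} := hg0
  have hqbar_ne : qbar ≠ 0 := (hmonic.map _).ne_zero
  have hgne : g ≠ 0 := by
    rintro rfl
    rw [hg, Ideal.span_singleton_eq_bot.mpr rfl, Ideal.mem_bot] at hqbarP
    exact hqbar_ne hqbarP
  have hgprime : Prime g := by
    have : P.IsPrime := hPprime
    rw [hg] at this
    exact (Ideal.span_singleton_prime hgne).mp this
  obtain ⟨h, hh⟩ : g ∣ qbar := by
    rw [← Ideal.mem_span_singleton, ← hg]; exact hqbarP
  have hsq : Squarefree qbar := hsep'.squarefree
  have hgh : ¬ (g ∣ h) := by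
    rintro ⟨w, hw⟩
    exact hgprime.not_unit (hsq g ⟨w, by rw [hh, hw]; ring⟩)
  set u := Φ (mkJ x) with hudef
  have hu : u ∈ NT := by
    show Φ.symm (Φ (mkJ x)) ∈ N.map mkJ
    rw [Φ.symm_apply_apply]
    exact Ideal.mem_map_of_mem _ hx
  obtain ⟨w0, hw0⟩ := Ideal.Quotient.mk_surjective (I := Ideal.span ({qbar} : Set ((A ⧸ I)[X]))) u
  have hw0P : w0 ∈ P := by
    show Ideal.Quotient.mk (Ideal.span ({qbar} : Set ((A ⧸ I)[X]))) w0 ∈ NT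
    rw [hw0]; exact hu
  obtain ⟨w1, hw1⟩ : g ∣ w0 := by
    rw [← Ideal.mem_span_singleton, ← hg]; exact hw0P
  set v := Ideal.Quotient.mk (Ideal.span ({qbar} : Set ((A ⧸ I)[X]))) h with hvdef
  have hvNT : v ∉ NT := by
    intro hv
    apply hgh
    rw [← Ideal.mem_span_singleton, ← hg]
    exact hv
  have hvu : v * u = 0 := by
    rw [hvdef, ← hw0, ← map_mul]
    apply Ideal.Quotient.eq_zero_iff_mem.mpr
    apply Ideal.mem_span_singleton.mpr
    exact ⟨w1, by rw [hw1, hh]; ring⟩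
  obtain ⟨s, hs⟩ := Ideal.Quotient.mk_surjective (I := J) (Φ.symm v)
  refine ⟨s, ?_, ?_⟩
  · intro hsN
    apply hvNT
    show Φ.symm v ∈ N.map mkJ
    rw [← hs]
    exact Ideal.mem_map_of_mem _ hsN
  · show s * x ∈ J
    have h1 : mkJ (s * x) = 0 := by
      have h2 : mkJ x = Φ.symm u := by rw [hudef, Φ.symm_apply_apply]
      have h3 : Φ.symm v * Φ.symm u = Φ.symm (v * u) := (map_mul Φ.symm v u).symm
      rw [map_mul, hs, h2, h3, hvu, map_zero]
    exact Ideal.Quotient.eq_zero_iff_mem.mp h1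

end Setup

section Core

lemma core {B : Type} [CommRing B] [IsDomain B] [IsNoetherianRing B]
    (N Qp : Ideal B) (hN : N.IsMaximal) (hQp : Qp.IsPrime) (hQ0 : Qp ≠ ⊥) (hQN : Qp < N)
    (u v : B) (hu : u ∈ N * N) (hv : v ∈ N)
    (hL : ∀ x ∈ N, ∃ s ∉ N, s * x ∈ Ideal.span {u, v}) : False := by
  classical
  haveI := hN.isPrime
  set Aloc := Localization.AtPrime N with hAloc
  set alg := algebraMap B Aloc with halg
  have halginj : Function.Injective alg := by
    apply IsLocalization.injective Aloc (M := N.primeCompl)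
    intro a ha
    exact mem_nonZeroDivisors_of_ne_zero (fun h0 => ha (h0 ▸ N.zero_mem))
  have hmapN : Ideal.map alg N = maximalIdeal Aloc := Localization.AtPrime.map_eq_maximalIdeal
  set n := maximalIdeal Aloc with hn
  have hvn : alg v ∈ n := by rw [← hmapN]; exact Ideal.mem_map_of_mem _ hv
  have h0 : n ≤ Ideal.span {alg u, alg v} := by
    rw [← hmapN, Ideal.map_le_iff_le_comap]
    intro x hx
    obtain ⟨s, hs, hsx⟩ := hL x hx
    rw [Ideal.mem_comap]
    have hsx' : alg (s * x) ∈ Ideal.span {alg u, alg v} := by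
      have hmem := Ideal.mem_map_of_mem alg hsx
      rwa [Ideal.map_span, Set.image_pair] at hmem
    have hunit : IsUnit (alg s) := IsLocalization.map_units Aloc (⟨s, hs⟩ : N.primeCompl)
    obtain ⟨c, hc⟩ := hunit.exists_left_inv
    have : alg x = c * alg (s * x) := by rw [map_mul, ← mul_assoc, hc, one_mul]
    rw [this]
    exact Ideal.mul_mem_left _ c hsx'
  have hun : alg u ∈ n * n := by
    have hmem := Ideal.mem_map_of_mem alg hu
    rwa [Ideal.map_mul, hmapN] at hmem
  have h1 : n ≤ Ideal.span {alg v} ⊔ n * n := by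
    intro x hx
    obtain ⟨a, b, hab⟩ := Ideal.mem_span_pair.mp (h0 hx)
    rw [← hab]
    exact Submodule.add_mem _
      (Ideal.mem_sup_right (Ideal.mul_mem_left _ a hun))
      (Ideal.mem_sup_left (Ideal.mem_span_singleton.mpr ⟨b, mul_comm b (alg v)⟩))
  set sv := Ideal.span {alg v} with hsv
  have hsvn : sv ≤ n := by rw [hsv, Ideal.span_le, Set.singleton_subset_iff]; exact hvn
  have hn_ne : n ≠ ⊤ := (maximalIdeal.isMaximal Aloc).ne_top
  have hsv_ne : sv ≠ ⊤ := fun h => hn_ne (top_le_iff.mp (h ▸ hsvn))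
  haveI : Nontrivial (Aloc ⧸ sv) := Ideal.Quotient.nontrivial_iff.mpr hsv_ne
  haveI : IsNoetherianRing Aloc :=
    IsLocalization.isNoetherianRing N.primeCompl Aloc inferInstance
  haveI : IsNoetherianRing (Aloc ⧸ sv) :=
    isNoetherianRing_of_surjective Aloc _ (Ideal.Quotient.mk sv) Ideal.Quotient.mk_surjective
  haveI : IsLocalRing (Aloc ⧸ sv) :=
    IsLocalRing.of_surjective' (Ideal.Quotient.mk sv) Ideal.Quotient.mk_surjective
  set nbar := n.map (Ideal.Quotient.mk sv) with hnbar
  have hnbar2 : nbar ≤ nbar • nbar := by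
    have hstep : nbar ≤ sv.map (Ideal.Quotient.mk sv) ⊔ nbar * nbar := by
      rw [hnbar, ← Ideal.map_mul, ← Ideal.map_sup]
      exact Ideal.map_mono h1
    rwa [Ideal.map_quotient_self, bot_sup_eq, ← smul_eq_mul] at hstep
  have hnbar_ne : nbar ≠ ⊤ := by
    intro h
    apply hn_ne
    rw [Ideal.eq_top_iff_one]
    have h1' : Ideal.Quotient.mk sv 1 ∈ nbar := h ▸ Submodule.mem_top
    exact (Ideal.mem_quotient_iff_mem hsvn).mp h1'
  have hjac : nbar ≤ Ideal.jacobson ⊥ := by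
    rw [IsLocalRing.jacobson_eq_maximalIdeal ⊥ bot_ne_top]
    exact le_maximalIdeal hnbar_ne
  have hnbar_bot : nbar = ⊥ :=
    Submodule.eq_bot_of_le_smul_of_le_jacobson_bot nbar nbar
      (IsNoetherian.noetherian _) hnbar2 hjac
  have hn_sv : n ≤ sv := by
    intro y hy
    have hmem : Ideal.Quotient.mk sv y ∈ nbar := Ideal.mem_map_of_mem _ hy
    rw [hnbar_bot, Ideal.mem_bot] at hmem
    exact Ideal.Quotient.eq_zero_iff_mem.mp hmem
  have hneq : n = sv := le_antisymm hn_sv hsvn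
  -- now the prime `Qp` localizes to a nonzero prime strictly below `n`
  set QA := Ideal.map alg Qp with hQA
  have hdisj : Disjoint (N.primeCompl : Set B) (Qp : Set B) := by
    rw [Set.disjoint_left]
    intro a ha ha'
    exact ha (hQN.le ha')
  haveI hQAprime : QA.IsPrime :=
    IsLocalization.isPrime_of_isPrime_disjoint N.primeCompl Aloc Qp hQp hdisj
  have hcomapQA : Ideal.comap alg QA = Qp :=
    IsLocalization.under_map_of_isPrime_disjoint N.primeCompl Aloc hQp hdisj
  have hQAn : QA ≤ n := by rw [← hmapN]; exact Ideal.map_mono hQN.le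
  have hvQA : alg v ∉ QA := by
    intro hvm
    have hle : n ≤ QA := by
      rw [hneq, hsv, Ideal.span_le, Set.singleton_subset_iff]; exact hvm
    have heq2 : QA = n := le_antisymm hQAn hle
    apply hQN.ne
    rw [← hcomapQA, heq2, hn]; exact Localization.AtPrime.under_maximalIdeal (I := N)
  have hQA0 : QA ≠ ⊥ := by
    intro h
    apply hQ0
    rw [← hcomapQA, h]
    refine le_antisymm (fun x hx => ?_) bot_le
    rw [Ideal.mem_comap, Ideal.mem_bot] at hx
    rw [Ideal.mem_bot]
    exact halginj (by rw [hx, map_zero])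
  have hQAsmul : QA ≤ n • QA := by
    intro y hy
    have hysv : y ∈ sv := hneq ▸ hQAn hy
    obtain ⟨c, hc⟩ := Ideal.mem_span_singleton.mp hysv
    have hcQA : c ∈ QA := by
      rcases hQAprime.mem_or_mem (hc ▸ hy) with h | h
      · exact absurd h hvQA
      · exact h
    rw [hc, smul_eq_mul]
    exact Ideal.mul_mem_mul hvn hcQA
  have : QA = ⊥ :=
    Submodule.eq_bot_of_le_smul_of_le_jacobson_bot n QA
      (IsNoetherian.noetherian _) hQAsmul
      (by rw [IsLocalRing.jacobson_eq_maximalIdeal ⊥ bot_ne_top])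
  exact hQA0 this

end Core


section Setup2

variable (A : Type) [CommRing A] [IsDomain A] [IsLocalRing A] [IsNoetherianRing A]
variable (F : Type) [Field F] [Algebra A F] [IsFractionRing A F]
variable (q : Polynomial A) {m : ℕ}

lemma noetherianA' : IsNoetherianRing (AdjoinRoot q) :=
  isNoetherianRing_of_surjective (Polynomial A) _ (AdjoinRoot.mk q) AdjoinRoot.mk_surjective

lemma comap_eq_maximal (hmonic : q.Monic) (N : Ideal (AdjoinRoot q)) (hN : N.IsMaximal) :
    N.comap (algebraMap A (AdjoinRoot q)) = maximalIdeal A := by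
  haveI := moduleFinite A q hmonic
  haveI : Algebra.IsIntegral A (AdjoinRoot q) := Algebra.IsIntegral.of_finite _ _
  haveI := hN
  haveI := Ideal.isMaximal_comap_of_isIntegral_of_isMaximal
    (R := A) (S := AdjoinRoot q) N
  exact eq_maximalIdeal inferInstance

lemma middle_prime (hdim : ringKrullDim A = 2) :
    ∃ q0 : Ideal A, q0.IsPrime ∧ q0 ≠ ⊥ ∧ q0 < maximalIdeal A := by
  have hex : ∃ p : LTSeries (PrimeSpectrum A), 2 ≤ p.length := by
    by_contra hall
    push_neg at hall
    have hle : ringKrullDim A ≤ 1 := by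
      rw [ringKrullDim, Order.krullDim]
      apply iSup_le
      intro p
      have := hall p
      exact_mod_cast (by exact_mod_cast Nat.lt_succ_iff.mp this :
        (p.length : ℕ∞) ≤ (1 : ℕ∞))
    rw [hdim] at hle
    norm_num at hle
  obtain ⟨p, hp⟩ := hex
  have h01 : p ⟨0, by omega⟩ < p ⟨1, by omega⟩ := p.strictMono (by
    rw [Fin.mk_lt_mk]; omega)
  have h12 : p ⟨1, by omega⟩ < p ⟨2, by omega⟩ := p.strictMono (by
    rw [Fin.mk_lt_mk]; omega)
  refine ⟨(p ⟨1, by omega⟩).asIdeal, (p ⟨1, by omega⟩).isPrime, ?_, ?_⟩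
  · intro hbot
    have := (PrimeSpectrum.asIdeal_lt_asIdeal _ _).mpr h01
    rw [hbot] at this
    exact (not_lt_bot this)
  · have hlt := (PrimeSpectrum.asIdeal_lt_asIdeal _ _).mpr h12
    have hle2 : (p ⟨2, by omega⟩).asIdeal ≤ maximalIdeal A :=
      le_maximalIdeal (p ⟨2, by omega⟩).isPrime.ne_top
    exact lt_of_lt_of_le hlt hle2

lemma chain_below (hmonic : q.Monic) (hirr : Irreducible (q.map (algebraMap A F)))
    (hroot : IsPrimitiveRoot (AdjoinRoot.root q) m) (hm0 : 0 < m) (hmF : (m : F) ≠ 0)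
    (hdim : ringKrullDim A = 2)
    (N : Ideal (AdjoinRoot q)) (hN : N.IsMaximal) :
    ∃ Qp : Ideal (AdjoinRoot q), Qp.IsPrime ∧ Qp ≠ ⊥ ∧ Qp < N := by
  haveI := moduleFinite A q hmonic
  haveI : Algebra.IsIntegral A (AdjoinRoot q) := Algebra.IsIntegral.of_finite _ _
  obtain ⟨q0, hq0p, hq0ne, hq0lt⟩ := middle_prime A hdim
  have hinj := algebraMap_injective' A F q hmonic hirr
  haveI := hq0p
  have hcomapbot : ∀ J : Ideal (AdjoinRoot q), J = ⊥ →
      J.comap (algebraMap A (AdjoinRoot q)) = ⊥ := by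
    intro J hJ
    refine le_antisymm (fun x hx => ?_) bot_le
    rw [hJ, Ideal.mem_comap, Ideal.mem_bot] at hx
    rw [Ideal.mem_bot]
    exact hinj (by rw [hx, map_zero])
  obtain ⟨Q1, hQ1ge, hQ1p, hQ1com⟩ :=
    Ideal.exists_ideal_over_prime_of_isIntegral q0 ⊥ (by
      rw [hcomapbot ⊥ rfl]; exact bot_le)
  haveI := (maximalIdeal.isMaximal A).isPrime
  obtain ⟨N1, hN1ge, hN1p, hN1com⟩ :=
    Ideal.exists_ideal_over_prime_of_isIntegral (maximalIdeal A) Q1 (by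
      rw [hQ1com]; exact hq0lt.le)
  haveI hN1max : N1.IsMaximal :=
    Ideal.isMaximal_of_isIntegral_of_isMaximal_comap (R := A) N1 (by
      rw [hN1com]; exact maximalIdeal.isMaximal A)
  obtain ⟨σ, hσ⟩ := transitivity A F q hmonic hirr hroot hm0 hmF N N1 hN hN1max (by
    rw [comap_eq_maximal A q hmonic N hN, hN1com])
  haveI := hQ1p
  set Qp := Ideal.map σ Q1 with hQpdef
  have e1 : Ideal.map σ Q1
      = Ideal.map (σ.toRingEquiv : AdjoinRoot q →+* AdjoinRoot q) Q1 := rfl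
  have e2 : Ideal.map (σ.toRingEquiv : AdjoinRoot q →+* AdjoinRoot q) Q1
      = Ideal.comap σ.toRingEquiv.symm Q1 := Ideal.map_comap_of_equiv σ.toRingEquiv
  haveI hQpprime : Qp.IsPrime := by
    rw [hQpdef, e1, e2]
    exact Ideal.IsPrime.comap _
  have hcomQp : Qp.comap (algebraMap A (AdjoinRoot q)) = q0 := by
    rw [← hQ1com]
    ext a
    rw [Ideal.mem_comap, Ideal.mem_comap, hQpdef, e1, e2, Ideal.mem_comap]
    have hfix : σ.toRingEquiv.symm ((algebraMap A (AdjoinRoot q)) a)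
        = algebraMap A (AdjoinRoot q) a := σ.symm.commutes a
    rw [hfix]
  have hQpne : Qp ≠ ⊥ := by
    intro h
    exact hq0ne (by rw [← hcomQp, hcomapbot Qp h])
  have hQpleN : Qp ≤ N := by
    rw [hQpdef, ← hσ]
    exact Ideal.map_mono hN1ge
  have hQpneN : Qp ≠ N := by
    intro h
    apply hq0lt.ne
    rw [← hcomQp, h, comap_eq_maximal A q hmonic N hN]
  exact ⟨Qp, hQpprime, hQpne, lt_of_le_of_ne hQpleN hQpneN⟩

lemma exists_unique_factor {ι : Type} [Fintype ι]
    (hmonic : q.Monic) (hirr : Irreducible (q.map (algebraMap A F)))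
    (hroot : IsPrimitiveRoot (AdjoinRoot.root q) m) (hm0 : 0 < m) (hmF : (m : F) ≠ 0)
    (hsep : (q.map (residue A)).Separable) (hdim : ringKrullDim A = 2)
    (w w' : A) (hparams : Ideal.span {w, w'} = maximalIdeal A)
    (ws : ι → AdjoinRoot q) (hfac : algebraMap A (AdjoinRoot q) w = ∏ i, ws i)
    (N : Ideal (AdjoinRoot q)) (hN : N.IsMaximal) : ∃! i, ws i ∈ N := by
  classical
  haveI := moduleFinite A q hmonic
  haveI : Algebra.IsIntegral A (AdjoinRoot q) := Algebra.IsIntegral.of_finite _ _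
  have hcom := comap_eq_maximal A q hmonic N hN
  have hwM : w ∈ maximalIdeal A := by
    rw [← hparams]; exact Ideal.subset_span (by simp)
  have hw'M : w' ∈ maximalIdeal A := by
    rw [← hparams]; exact Ideal.subset_span (by simp)
  have hwN : algebraMap A (AdjoinRoot q) w ∈ N := by
    rw [← Ideal.mem_comap, hcom]; exact hwM
  have hw'N : algebraMap A (AdjoinRoot q) w' ∈ N := by
    rw [← Ideal.mem_comap, hcom]; exact hw'M
  haveI := hN.isPrime
  have hfacN : (∏ i, ws i) ∈ N := hfac ▸ hwN
  obtain ⟨i0, _, hi0⟩ := (Ideal.IsPrime.prod_mem_iff).mp hfacN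
  refine ⟨i0, hi0, ?_⟩
  intro i1 hi1
  by_contra hne
  have hprodmem : algebraMap A (AdjoinRoot q) w ∈ N * N := by
    rw [hfac, ← Finset.mul_prod_erase Finset.univ ws (Finset.mem_univ i1),
      ← Finset.mul_prod_erase (Finset.univ.erase i1) ws
        (Finset.mem_erase.mpr ⟨fun h => hne h.symm, Finset.mem_univ i0⟩)]
    exact Ideal.mul_mem_mul hi1 (Ideal.mul_mem_right _ _ hi0)
  have hL : ∀ x ∈ N, ∃ s ∉ N, s * x ∈
      Ideal.span {algebraMap A (AdjoinRoot q) w, algebraMap A (AdjoinRoot q) w'} := by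
    intro x hx
    obtain ⟨s, hs, hsx⟩ := unram A q hmonic hsep N hN
      (Ideal.map_le_iff_le_comap.mpr (le_of_eq hcom.symm)) hx
    refine ⟨s, hs, ?_⟩
    rw [← hparams, Ideal.map_span, Set.image_pair] at hsx
    exact hsx
  obtain ⟨Qp, hQpp, hQp0, hQpN⟩ :=
    chain_below A F q hmonic hirr hroot hm0 hmF hdim N hN
  haveI := isDomainA' A F q hmonic hirr
  haveI := noetherianA' A q
  exact core N Qp hN hQpp hQp0 hQpN _ _ hprodmem hw'N hL

end Setup2

section Setup3

variable (A : Type) [CommRing A] [IsDomain A] [IsLocalRing A] [IsNoetherianRing A]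
variable (F : Type) [Field F] [Algebra A F] [IsFractionRing A F]
variable (q : Polynomial A) {m : ℕ}

lemma factor_assoc {ι : Type} [Fintype ι]
    (hmonic : q.Monic) (hirr : Irreducible (q.map (algebraMap A F)))
    (hroot : IsPrimitiveRoot (AdjoinRoot.root q) m) (hm0 : 0 < m) (hmF : (m : F) ≠ 0)
    (hsep : (q.map (residue A)).Separable) (hdim : ringKrullDim A = 2)
    (w w' : A) (hparams : Ideal.span {w, w'} = maximalIdeal A)
    (ws : ι → AdjoinRoot q) (hfac : algebraMap A (AdjoinRoot q) w = ∏ i, ws i)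
    (hprime : ∀ i, Prime (ws i))
    (N : Ideal (AdjoinRoot q)) (hN : N.IsMaximal)
    (σ : AdjoinRoot q ≃ₐ[A] AdjoinRoot q) (i : ι)
    (hwsN : ws i ∈ N) (hσws : σ (ws i) ∈ N) :
    Associated (σ (ws i)) (ws i) := by
  classical
  haveI := isDomainA' A F q hmonic hirr
  obtain ⟨j0, hj0, huniq⟩ := exists_unique_factor A F q hmonic hirr hroot hm0 hmF hsep hdim
    w w' hparams ws hfac N hN
  have hd : σ (ws i) ∣ algebraMap A (AdjoinRoot q) w := by
    have h1 : ws i ∣ algebraMap A (AdjoinRoot q) w := by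
      rw [hfac]; exact Finset.dvd_prod_of_mem ws (Finset.mem_univ i)
    have h2 := map_dvd σ h1
    rwa [σ.commutes] at h2
  have hσprime : Prime (σ (ws i)) := (MulEquiv.prime_iff σ.toMulEquiv).mpr (hprime i)
  rw [hfac] at hd
  obtain ⟨i2, _, hdvd2⟩ := Prime.exists_mem_finset_dvd hσprime hd
  have hassoc2 : Associated (σ (ws i)) (ws i2) :=
    hσprime.irreducible.associated_of_dvd (hprime i2).irreducible hdvd2
  have hi2N : ws i2 ∈ N := by
    obtain ⟨u, hu⟩ := hassoc2
    rw [← hu]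
    exact Ideal.mul_mem_right _ _ hσws
  have h1 : i2 = j0 := huniq i2 hi2N
  have h2 : i = j0 := huniq i hwsN
  rw [h1.trans h2.symm] at hassoc2
  exact hassoc2

lemma span_fix_all {ι : Type} [Fintype ι]
    (hmonic : q.Monic) (hirr : Irreducible (q.map (algebraMap A F)))
    (hroot : IsPrimitiveRoot (AdjoinRoot.root q) m) (hm0 : 0 < m) (hmF : (m : F) ≠ 0)
    (hsep : (q.map (residue A)).Separable) (hdim : ringKrullDim A = 2)
    (w w' : A) (hparams : Ideal.span {w, w'} = maximalIdeal A)
    (ws : ι → AdjoinRoot q) (hfac : algebraMap A (AdjoinRoot q) w = ∏ i, ws i)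
    (hprime : ∀ i, Prime (ws i))
    (horb : ∀ i i', ∃ g : AdjoinRoot q ≃ₐ[A] AdjoinRoot q, g (ws i) = ws i')
    (N : Ideal (AdjoinRoot q)) (hN : N.IsMaximal)
    (h : AdjoinRoot q ≃ₐ[A] AdjoinRoot q) (hmap : Ideal.map h N = N) :
    ∀ i, Ideal.map h (Ideal.span {ws i}) = Ideal.span {ws i} := by
  classical
  haveI := isDomainA' A F q hmonic hirr
  obtain ⟨j0, hj0, huniq⟩ := exists_unique_factor A F q hmonic hirr hroot hm0 hmF hsep hdim
    w w' hparams ws hfac N hN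
  have hσj0 : h (ws j0) ∈ N := by
    have := Ideal.mem_map_of_mem h hj0
    rwa [hmap] at this
  have hassoc0 : Associated (h (ws j0)) (ws j0) :=
    factor_assoc A F q hmonic hirr hroot hm0 hmF hsep hdim w w' hparams ws hfac hprime
      N hN h j0 hj0 hσj0
  intro i
  obtain ⟨g, hg⟩ := horb j0 i
  obtain ⟨uu, huu⟩ := hassoc0.symm
  have hcm := auts_commute A F q hmonic hirr hroot hm0 h g (ws j0)
  have hkey : h (ws i) = ws i * g uu := by
    rw [← hg, hcm, ← huu, map_mul, hg]
  have hunit : IsUnit (g (uu : AdjoinRoot q)) := (Units.isUnit uu).map g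
  have hassoc : Associated (ws i) (h (ws i)) :=
    ⟨hunit.unit, by rw [IsUnit.unit_spec]; exact hkey.symm⟩
  rw [Ideal.map_span, Set.image_singleton]
  exact Ideal.span_singleton_eq_span_singleton.mpr hassoc.symm

end Setup3

end Statement19

set_option synthInstance.maxHeartbeats 400000 in
set_option maxHeartbeats 1000000 in
set_option linter.unusedVariables false in
/-- Lemmas 3.1/3.2 of Saltman, "Cyclic algebras over p-adic curves".
Let `R` be a two-dimensional regular local domain with maximal ideal `M = (π, δ)`
(`π, δ ∈ M − M²`), residue characteristic `p`, and fraction field `K`.  Let `m` be prime to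
`p`, let `ρ` be a primitive `m`-th root of unity over `K` with monic minimal polynomial
`f ∈ R[x]`, and let `R' = R[x]/(f)` (modelled by `AdjoinRoot f`; `R'/R` is Galois with
abelian group `H = Aut_R(R')`, and is étale since `f` is separable mod the maximal ideal).
Choose prime factorizations `π = ∏ πᵢ` and `δ = ∏ δⱼ` in the UFD `R'` such that the sets
`{πᵢ}` and `{δⱼ}` each form a single `H`-orbit.  Then:
* every maximal ideal of `R'` contains exactly one `πᵢ` and exactly one `δⱼ`;
* the stabilizer `H_M` of a maximal ideal is contained in `H_π ∩ H_δ` (the stabilizers of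
  the primes over `(π)` and `(δ)`);
* for each pair `(i,j)`, the ideal `(πᵢ, δⱼ)R'` is either all of `R'` or is the intersection
  of the set of maximal ideals of `R'` containing it, and this set forms a single (uniquely
  determined) `H_π ∩ H_δ` orbit. -/
theorem adjoin_root_of_unity_over_2dim_regular_local
    (R : Type) [CommRing R] [IsDomain R] [IsLocalRing R] [IsNoetherianRing R]
    (hdim : ringKrullDim R = 2)
    (π δ : R) (hparams : Ideal.span {π, δ} = maximalIdeal R)
    (hπ2 : π ∉ maximalIdeal R ^ 2) (hδ2 : δ ∉ maximalIdeal R ^ 2)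
    (K : Type) [Field K] [Algebra R K] [IsFractionRing R K]
    (p m : ℕ) [CharP (ResidueField R) p] (hm : Nat.Coprime m p) (hm0 : 0 < m)
    -- `f` is the (monic) minimal polynomial over `K` of a primitive `m`-th root of unity,
    -- with coefficients in `R`, and `R' = R[x]/(f)` is étale over `R`
    (f : Polynomial R) (hmonic : f.Monic)
    (hirr : Irreducible (f.map (algebraMap R K)))
    (hroot : IsPrimitiveRoot (AdjoinRoot.root f) m)
    (hsep : (f.map (residue R)).Separable)
    -- prime factorizations of `π` and `δ` in `R'`, each a single `H`-orbit
    (ι κ : Type) [Fintype ι] [Fintype κ]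
    (πs : ι → AdjoinRoot f) (δs : κ → AdjoinRoot f)
    (hπfac : algebraMap R (AdjoinRoot f) π = ∏ i, πs i)
    (hδfac : algebraMap R (AdjoinRoot f) δ = ∏ j, δs j)
    (hπprime : ∀ i, Prime (πs i)) (hδprime : ∀ j, Prime (δs j))
    (hπorb : ∀ i i', ∃ h : AdjoinRoot f ≃ₐ[R] AdjoinRoot f, h (πs i) = πs i')
    (hδorb : ∀ j j', ∃ h : AdjoinRoot f ≃ₐ[R] AdjoinRoot f, h (δs j) = δs j') :
    -- every maximal ideal of `R'` contains exactly one `πᵢ` and one `δⱼ`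
    (∀ M : Ideal (AdjoinRoot f), M.IsMaximal → (∃! i, πs i ∈ M) ∧ (∃! j, δs j ∈ M)) ∧
    -- `H_M ⊆ H_π ∩ H_δ`
    (∀ M : Ideal (AdjoinRoot f), M.IsMaximal →
      ∀ h : AdjoinRoot f ≃ₐ[R] AdjoinRoot f, Ideal.map h M = M →
        (∀ i, Ideal.map h (Ideal.span {πs i}) = Ideal.span {πs i}) ∧
        (∀ j, Ideal.map h (Ideal.span {δs j}) = Ideal.span {δs j})) ∧
    -- `(πᵢ, δⱼ)R'` is `R'` or the intersection of the maximal ideals containing it, which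
    -- form a single (uniquely determined) `H_π ∩ H_δ` orbit
    (∀ i j, Ideal.span {πs i, δs j} = ⊤ ∨
      (Ideal.span {πs i, δs j}
          = sInf {M : Ideal (AdjoinRoot f) | M.IsMaximal ∧ Ideal.span {πs i, δs j} ≤ M} ∧
        ∃ M₀ : Ideal (AdjoinRoot f), M₀.IsMaximal ∧ Ideal.span {πs i, δs j} ≤ M₀ ∧
          {M : Ideal (AdjoinRoot f) | M.IsMaximal ∧ Ideal.span {πs i, δs j} ≤ M}
            = {M | ∃ h : AdjoinRoot f ≃ₐ[R] AdjoinRoot f,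
                Ideal.map h (Ideal.span {πs i}) = Ideal.span {πs i} ∧
                Ideal.map h (Ideal.span {δs j}) = Ideal.span {δs j} ∧
                M = Ideal.map h M₀})) := by
  classical
  haveI := Statement19.isDomainA' R K f hmonic hirr
  -- `m` is invertible in `K`
  have hmF : (m : K) ≠ 0 := by
    intro h0
    have h1 : algebraMap R K ((m : ℕ) : R) = 0 := by rw [map_natCast]; exact h0
    have h2 : ((m : ℕ) : R) = 0 := IsFractionRing.injective R K (by rw [h1, map_zero])
    have h3 : ((m : ℕ) : ResidueField R) = 0 := by
      rw [← map_natCast (residue R), h2, map_zero]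
    have h4 : p ∣ m := (CharP.cast_eq_zero_iff _ p m).mp h3
    have h5 : p ∣ Nat.gcd m p := Nat.dvd_gcd h4 dvd_rfl
    rw [Nat.Coprime] at hm
    rw [hm] at h5
    have h6 : p = 1 := Nat.dvd_one.mp h5
    have h7 : (1 : ResidueField R) = 0 := by
      have h8 := CharP.cast_eq_zero (ResidueField R) p
      rw [h6] at h8
      simpa using h8
    exact one_ne_zero h7
  have hparams' : Ideal.span {δ, π} = maximalIdeal R := by
    rw [Ideal.span_pair_comm]; exact hparams
  have hπI : ∀ i, πs i ∈ Ideal.span {πs i} := fun i => Ideal.subset_span (by simp)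
  refine ⟨?_, ?_, ?_⟩
  · -- part 1
    intro M hM
    exact ⟨Statement19.exists_unique_factor R K f hmonic hirr hroot hm0 hmF hsep hdim
        π δ hparams πs hπfac M hM,
      Statement19.exists_unique_factor R K f hmonic hirr hroot hm0 hmF hsep hdim
        δ π hparams' δs hδfac M hM⟩
  · -- part 2
    intro M hM h hmap
    exact ⟨Statement19.span_fix_all R K f hmonic hirr hroot hm0 hmF hsep hdim
        π δ hparams πs hπfac hπprime hπorb M hM h hmap,
      Statement19.span_fix_all R K f hmonic hirr hroot hm0 hmF hsep hdim
        δ π hparams' δs hδfac hδprime hδorb M hM h hmap⟩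
  · -- part 3
    intro i j
    by_cases htop : Ideal.span {πs i, δs j} = ⊤
    · exact Or.inl htop
    right
    set I := Ideal.span {πs i, δs j} with hIdef
    obtain ⟨N₀, hN₀max, hN₀ge⟩ := Ideal.exists_le_maximal I htop
    have hπiI : πs i ∈ I := Ideal.subset_span (by simp)
    have hδjI : δs j ∈ I := Ideal.subset_span (by simp)
    -- the image of the maximal ideal of `R` is contained in `I`
    have hπdvd : πs i ∣ algebraMap R (AdjoinRoot f) π := by
      rw [hπfac]; exact Finset.dvd_prod_of_mem πs (Finset.mem_univ i)
    have hδdvd : δs j ∣ algebraMap R (AdjoinRoot f) δ := by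
      rw [hδfac]; exact Finset.dvd_prod_of_mem δs (Finset.mem_univ j)
    have hMI : Ideal.map (algebraMap R (AdjoinRoot f)) (maximalIdeal R) ≤ I := by
      rw [← hparams, Ideal.map_span, Set.image_pair, Ideal.span_le]
      rintro y hy
      simp only [Set.mem_insert_iff, Set.mem_singleton_iff] at hy
      rcases hy with rfl | rfl
      · obtain ⟨c, hc⟩ := hπdvd
        rw [hc]; exact Ideal.mul_mem_right _ _ hπiI
      · obtain ⟨c, hc⟩ := hδdvd
        rw [hc]; exact Ideal.mul_mem_right _ _ hδjI
    constructor
    · -- I equals the intersection of the maximal ideals containing it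
      apply le_antisymm
      · apply le_sInf
        rintro Mx ⟨hMmax, hMge⟩
        exact hMge
      · intro x hx
        by_contra hxI
        have hCtop : I.colon (Ideal.span {x}) = ⊤ := by
          by_contra hCne
          obtain ⟨Nm, hNmmax, hCNm⟩ := Ideal.exists_le_maximal _ hCne
          by_cases hIN : I ≤ Nm
          · have hxNm : x ∈ Nm := Ideal.mem_sInf.mp hx ⟨hNmmax, hIN⟩
            obtain ⟨s, hs, hsx⟩ := Statement19.unram R f hmonic hsep Nm hNmmax
              (le_trans hMI hIN) hxNm
            have hsC : s ∈ I.colon (Ideal.span {x}) :=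
              Ideal.mem_colon_span_singleton.mpr (hMI hsx)
            exact hs (hCNm hsC)
          · obtain ⟨s, hsI, hsNm⟩ := SetLike.not_le_iff_exists.mp hIN
            have hsC : s ∈ I.colon (Ideal.span {x}) :=
              Ideal.mem_colon_span_singleton.mpr (Ideal.mul_mem_right x I hsI)
            exact hsNm (hCNm hsC)
        have h1C : (1 : AdjoinRoot f) ∈ I.colon (Ideal.span {x}) := by
          rw [hCtop]; exact Submodule.mem_top
        have := Ideal.mem_colon_span_singleton.mp h1C
        rw [one_mul] at this
        exact hxI this
    · -- the set of maximal ideals containing `I` is a single orbit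
      refine ⟨N₀, hN₀max, hN₀ge, ?_⟩
      ext Mx
      simp only [Set.mem_setOf_eq]
      constructor
      · rintro ⟨hMxmax, hMxge⟩
        obtain ⟨σ, hσ⟩ := Statement19.transitivity R K f hmonic hirr hroot hm0 hmF Mx N₀ hMxmax hN₀max
          (by rw [Statement19.comap_eq_maximal R f hmonic _ hMxmax, Statement19.comap_eq_maximal R f hmonic _ hN₀max])
        have hπiN₀ : πs i ∈ N₀ := hN₀ge hπiI
        have hδjN₀ : δs j ∈ N₀ := hN₀ge hδjI
        have hσπ : σ (πs i) ∈ Mx := by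
          rw [← hσ]; exact Ideal.mem_map_of_mem σ hπiN₀
        have hσδ : σ (δs j) ∈ Mx := by
          rw [← hσ]; exact Ideal.mem_map_of_mem σ hδjN₀
        have haπ : Associated (σ (πs i)) (πs i) :=
          Statement19.factor_assoc R K f hmonic hirr hroot hm0 hmF hsep hdim π δ hparams πs hπfac hπprime
            Mx hMxmax σ i (hMxge hπiI) hσπ
        have haδ : Associated (σ (δs j)) (δs j) :=
          Statement19.factor_assoc R K f hmonic hirr hroot hm0 hmF hsep hdim δ π hparams' δs hδfac hδprime
            Mx hMxmax σ j (hMxge hδjI) hσδ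
        refine ⟨σ, ?_, ?_, hσ.symm⟩
        · rw [Ideal.map_span, Set.image_singleton]
          exact Ideal.span_singleton_eq_span_singleton.mpr haπ
        · rw [Ideal.map_span, Set.image_singleton]
          exact Ideal.span_singleton_eq_span_singleton.mpr haδ
      · rintro ⟨σ, hfixπ, hfixδ, rfl⟩
        constructor
        · have e1 : Ideal.map σ N₀ = Ideal.comap σ.toRingEquiv.symm N₀ := by
            have e0 : Ideal.map σ N₀
                = Ideal.map (σ.toRingEquiv : AdjoinRoot f →+* AdjoinRoot f) N₀ := rfl
            rw [e0]
            exact Ideal.map_comap_of_equiv σ.toRingEquiv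
          rw [e1]
          exact Ideal.comap_isMaximal_of_surjective _ σ.toRingEquiv.symm.surjective
            (H := hN₀max)
        · rw [hIdef, Ideal.span_le]
          rintro y hy
          simp only [Set.mem_insert_iff, Set.mem_singleton_iff] at hy
          rcases hy with rfl | rfl
          · have h1 : πs i ∈ Ideal.span {σ (πs i)} := by
              rw [← Set.image_singleton, ← Ideal.map_span, hfixπ]
              exact Ideal.subset_span (by simp)
            obtain ⟨c, hc⟩ := Ideal.mem_span_singleton.mp h1
            rw [hc]
            exact Ideal.mul_mem_right _ _ (Ideal.mem_map_of_mem σ (hN₀ge hπiI))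
          · have h1 : δs j ∈ Ideal.span {σ (δs j)} := by
              rw [← Set.image_singleton, ← Ideal.map_span, hfixδ]
              exact Ideal.subset_span (by simp)
            obtain ⟨c, hc⟩ := Ideal.mem_span_singleton.mp h1
            rw [hc]
            exact Ideal.mul_mem_right _ _ (Ideal.mem_map_of_mem σ (hN₀ge hδjI))
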